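/- Knight's identity: for all u, v ∈ ℝ and τ ∈ (0,1), ρ_τ(u − v) − ρ_τ(u) = −v·(τ − 1{u ≤ 0}) + ∫₀^v (1{u ≤ s} − 1{u ≤ 0}) ds. -/

import Mathlib

/-- The quantile check function ρ_τ(u) = (τ − 1{u ≤ 0})·u. -/
noncomputable def check (τ u : ℝ) : ℝ := (τ - if u ≤ 0 then 1 else 0) * u

lemma ind_mono (u : ℝ) : Monotone (fun s => if u ≤ s then (1 : ℝ) else 0) := by
  intro x y hxy
  by_cases hx : u ≤ x
  · simp [hx, le_trans hx hxy]
  · by_cases hy : u ≤ y <;> simp [hx, hy]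

lemma ind_intble (u a b : ℝ) :
    IntervalIntegrable (fun s => if u ≤ s then (1 : ℝ) else 0) MeasureTheory.volume a b :=
  (ind_mono u).intervalIntegrable

lemma ind_integral_le (u a b : ℝ) (hab : a ≤ b) :
    ∫ s in a..b, (if u ≤ s then (1 : ℝ) else 0) = max b u - max a u := by
  have hcong : ∫ s in a..b, (if u ≤ s then (1 : ℝ) else 0)
      = ∫ s in a..b, Set.indicator (Set.Ioi u) (fun _ => (1 : ℝ)) s := by
    apply intervalIntegral.integral_congr_ae
    have h0 : MeasureTheory.volume ({u} : Set ℝ) = 0 := MeasureTheory.measure_singleton u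
    filter_upwards [MeasureTheory.measure_eq_zero_iff_ae_notMem.mp h0] with s hs _
    have hsu : s ≠ u := hs
    by_cases h : u ≤ s
    · have : u < s := lt_of_le_of_ne h (Ne.symm hsu)
      simp [h, Set.indicator_of_mem (Set.mem_Ioi.mpr this)]
    · have : ¬ u < s := fun hc => h hc.le
      simp [h, Set.indicator_of_notMem (fun hc => this (Set.mem_Ioi.mp hc))]
  rw [hcong, intervalIntegral.integral_of_le hab, MeasureTheory.setIntegral_indicator
    measurableSet_Ioi]
  have hset : Set.Ioc a b ∩ Set.Ioi u = Set.Ioc (max a u) b := by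
    ext x
    simp only [Set.mem_inter_iff, Set.mem_Ioc, Set.mem_Ioi, max_lt_iff]
    tauto
  rw [hset, MeasureTheory.setIntegral_const, MeasureTheory.measureReal_def, Real.volume_Ioc, smul_eq_mul, mul_one]
  rcases le_total u b with h | h
  · rw [ENNReal.toReal_ofReal (sub_nonneg.mpr (max_le hab h)), max_eq_left h]
  · rw [max_eq_right (hab.trans h), max_eq_right h, sub_self,
      ENNReal.ofReal_of_nonpos (by linarith), ENNReal.toReal_zero]

theorem knight_identity (τ : ℝ) (hτ : τ ∈ Set.Ioo (0 : ℝ) 1) (u v : ℝ) :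
    check τ (u - v) - check τ u =
      -v * (τ - if u ≤ 0 then 1 else 0) +
        ∫ s in (0 : ℝ)..v, ((if u ≤ s then (1 : ℝ) else 0) - (if u ≤ 0 then (1 : ℝ) else 0)) := by
  have ind_integral : ∀ a b : ℝ, ∫ s in a..b, (if u ≤ s then (1 : ℝ) else 0)
      = max b u - max a u := by
    intro a b
    rcases le_total a b with hab | hab
    · exact ind_integral_le u a b hab
    · rw [intervalIntegral.integral_symm, ind_integral_le u b a hab]; ring
  rw [intervalIntegral.integral_sub (ind_intble u 0 v) (intervalIntegrable_const),
    intervalIntegral.integral_const, ind_integral, check, check]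
  by_cases h0 : u ≤ 0 <;> by_cases hv : u - v ≤ 0 <;>
    simp only [h0, hv, if_true, if_false, smul_eq_mul] <;>
    [rw [max_eq_left (by linarith), max_eq_left h0];
     rw [max_eq_right (by linarith), max_eq_left h0];
     rw [max_eq_left (by linarith), max_eq_right (by linarith)];
     rw [max_eq_right (by linarith), max_eq_right (by linarith)]] <;> ring
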